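/- Let K be a field complete with respect to a non-archimedean absolute value |·|, with valuation ring O. Let f₁,…,f_m ∈ O[X₁,…,X_m] and suppose b ∈ O^m satisfies ‖(f₁(b),…,f_m(b))‖ < |det(J_b)|², where J_b is the Jacobian matrix of (f₁,…,f_m) at b and ‖·‖ is the maximum norm. Then there exists a unique a ∈ O^m with f_i(a) = 0 for all i and ‖a − b‖ = ‖J_b* · (f₁(b),…,f_m(b))ᵀ‖ / |det(J_b)|, where J_b* is the adjugate of J_b. -/

import Mathlib

/-- The maximum norm `‖(a₁,…,a_m)‖ = max_i ‖a_i‖` on `K^m` (as a supremum, which equals the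
maximum for a nonempty finite index type). -/
noncomputable def supNorm {K : Type*} [NormedField K] {m : ℕ} (x : Fin m → K) : ℝ :=
  ⨆ i, ‖x i‖


open MvPolynomial Polynomial Finset



section Helpers
variable {K : Type*} [NormedField K]

lemma na_sum (hna : IsNonarchimedean (fun x : K => ‖x‖)) {ι : Type*} (s : Finset ι) (g : ι → K)
    {C : ℝ} (hC : 0 ≤ C) (h : ∀ i ∈ s, ‖g i‖ ≤ C) : ‖∑ i ∈ s, g i‖ ≤ C := by
  classical
  induction s using Finset.induction with
  | empty => simpa using hC
  | @insert a s hx ih =>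
    rw [Finset.sum_insert hx]
    refine le_trans (hna _ _) (max_le (h a (by simp)) (ih fun i hi => h i (by simp [hi])))

lemma na_natCast (hna : IsNonarchimedean (fun x : K => ‖x‖)) (n : ℕ) : ‖(n : K)‖ ≤ 1 := by
  induction n with
  | zero => simp
  | succ k ih =>
    push_cast
    exact le_trans (hna _ _) (by simp [ih])

end Helpers

section SupNorm
variable {K : Type*} [NormedField K] {m : ℕ}

lemma supNorm_nonneg (x : Fin m → K) : 0 ≤ supNorm x :=
  Real.iSup_nonneg fun i => norm_nonneg _

lemma le_supNorm (x : Fin m → K) (i : Fin m) : ‖x i‖ ≤ supNorm x := by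
  exact le_ciSup (Set.Finite.bddAbove (Set.finite_range (fun i => ‖x i‖))) i

lemma supNorm_le {x : Fin m → K} {C : ℝ} (hC : 0 ≤ C) (h : ∀ i, ‖x i‖ ≤ C) :
    supNorm x ≤ C := Real.iSup_le h hC

end SupNorm

section Psi
variable {K : Type*} [NormedField K] {m : ℕ}

/-- substitute `X j ↦ x j + t * h j`, yielding a polynomial in `t`. -/
noncomputable def psi (x h : Fin m → K) : MvPolynomial (Fin m) K →+* Polynomial K :=
  MvPolynomial.eval₂Hom (Polynomial.C : K →+* Polynomial K)
    (fun j => Polynomial.C (x j) + Polynomial.X * Polynomial.C (h j))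

lemma psi_eval_one (x h : Fin m → K) (g : MvPolynomial (Fin m) K) :
    (psi x h g).eval 1 = MvPolynomial.eval (fun j => x j + h j) g := by
  have : (Polynomial.evalRingHom (1:K)).comp (psi x h)
      = (MvPolynomial.eval (fun j => x j + h j) : MvPolynomial (Fin m) K →+* K) := by
    apply MvPolynomial.ringHom_ext <;> simp [psi]
  exact DFunLike.congr_fun this g

lemma psi_coeff_zero (x h : Fin m → K) (g : MvPolynomial (Fin m) K) :
    (psi x h g).coeff 0 = MvPolynomial.eval x g := by
  have : (Polynomial.constantCoeff).comp (psi x h)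
      = (MvPolynomial.eval x : MvPolynomial (Fin m) K →+* K) := by
    apply MvPolynomial.ringHom_ext <;> simp [psi]
  exact DFunLike.congr_fun this g

lemma psi_coeff_one (x h : Fin m → K) (g : MvPolynomial (Fin m) K) :
    (psi x h g).coeff 1 = ∑ j, h j * MvPolynomial.eval x (MvPolynomial.pderiv j g) := by
  classical
  induction g using MvPolynomial.induction_on with
  | C c => simp [psi]
  | add p q hp hq => simp [map_add, hp, hq, Finset.sum_add_distrib, mul_add]
  | mul_X p i hp =>
    rw [map_mul]
    have hx : psi x h (MvPolynomial.X i) = Polynomial.C (x i) + Polynomial.X * Polynomial.C (h i) := by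
      simp [psi]
    rw [hx]
    rw [mul_add, Polynomial.coeff_add]
    rw [mul_comm (Polynomial.X) (Polynomial.C (h i)), ← mul_assoc]
    rw [Polynomial.coeff_mul_C, Polynomial.coeff_mul_X, Polynomial.coeff_mul_C]
    rw [hp, psi_coeff_zero]
    have : ∀ j, MvPolynomial.pderiv j (p * MvPolynomial.X i)
        = MvPolynomial.pderiv j p * MvPolynomial.X i
          + p * (if i = j then 1 else 0) := by
      intro j
      rw [MvPolynomial.pderiv_mul]
      congr 1
      by_cases hij : i = j
      · subst hij; simp
      · simp [MvPolynomial.pderiv_X_of_ne (Ne.symm hij) , hij]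
    simp only [this, map_add, map_mul, mul_add]
    rw [Finset.sum_add_distrib]
    congr 1
    · rw [Finset.sum_mul]
      apply Finset.sum_congr rfl
      intro j _
      simp [MvPolynomial.eval_X]; ring
    · rw [Finset.sum_eq_single i]
      · rw [if_pos rfl]; simp [mul_comm]
      · intro j _ hj; rw [if_neg (Ne.symm hj)]; simp
      · intro hmem; exact absurd (Finset.mem_univ i) hmem
end Psi

section CoeffBound
variable {K : Type*} [NormedField K]

/-- coefficient-decay predicate -/
def Pc {K : Type*} [NormedField K] (ε : ℝ) (p : Polynomial K) : Prop := ∀ k, ‖p.coeff k‖ ≤ ε ^ k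

lemma na_sum' (hna : IsNonarchimedean (fun x : K => ‖x‖)) {ι : Type*} (s : Finset ι) (g : ι → K)
    {C : ℝ} (hC : 0 ≤ C) (h : ∀ i ∈ s, ‖g i‖ ≤ C) : ‖∑ i ∈ s, g i‖ ≤ C := by
  classical
  induction s using Finset.induction with
  | empty => simpa using hC
  | @insert a s hx ih =>
    rw [Finset.sum_insert hx]
    exact le_trans (hna _ _) (max_le (h a (by simp)) (ih fun i hi => h i (by simp [hi])))

lemma Pc_C {ε : ℝ} (hε : 0 ≤ ε) {c : K} (hc : ‖c‖ ≤ 1) : Pc ε (Polynomial.C c) := by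
  intro k
  rcases Nat.eq_zero_or_pos k with rfl | hk
  · simpa using hc
  · rw [Polynomial.coeff_C, if_neg (Nat.pos_iff_ne_zero.mp hk)]
    simpa using pow_nonneg hε k

lemma Pc_mul (hna : IsNonarchimedean (fun x : K => ‖x‖)) {ε : ℝ} (hε : 0 ≤ ε)
    {p q : Polynomial K} (hp : Pc ε p) (hq : Pc ε q) : Pc ε (p * q) := by
  intro k
  rw [Polynomial.coeff_mul]
  refine na_sum' hna _ _ (pow_nonneg hε k) ?_
  rintro ⟨i, j⟩ hij
  rw [Finset.HasAntidiagonal.mem_antidiagonal] at hij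
  calc ‖p.coeff i * q.coeff j‖ = ‖p.coeff i‖ * ‖q.coeff j‖ := norm_mul _ _
    _ ≤ ε ^ i * ε ^ j := mul_le_mul (hp i) (hq j) (norm_nonneg _) (pow_nonneg hε i)
    _ = ε ^ k := by rw [← pow_add, hij]

lemma Pc_pow (hna : IsNonarchimedean (fun x : K => ‖x‖)) {ε : ℝ} (hε : 0 ≤ ε)
    {p : Polynomial K} (hp : Pc ε p) (n : ℕ) : Pc ε (p ^ n) := by
  induction n with
  | zero => simpa using Pc_C hε (by simp : ‖(1:K)‖ ≤ 1)
  | succ n ih => rw [pow_succ]; exact Pc_mul hna hε ih hp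

lemma Pc_sum (hna : IsNonarchimedean (fun x : K => ‖x‖)) {ε : ℝ} (hε : 0 ≤ ε)
    {ι : Type*} (s : Finset ι) (g : ι → Polynomial K)
    (h : ∀ i ∈ s, Pc ε (g i)) : Pc ε (∑ i ∈ s, g i) := by
  intro k
  rw [Polynomial.finset_sum_coeff]
  exact na_sum' hna _ _ (pow_nonneg hε k) fun i hi => h i hi k

lemma Pc_prod (hna : IsNonarchimedean (fun x : K => ‖x‖)) {ε : ℝ} (hε : 0 ≤ ε)
    {ι : Type*} (s : Finset ι) (g : ι → Polynomial K)
    (h : ∀ i ∈ s, Pc ε (g i)) : Pc ε (∏ i ∈ s, g i) := by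
  classical
  induction s using Finset.induction with
  | empty => simpa using Pc_C hε (by simp : ‖(1:K)‖ ≤ 1)
  | @insert a s hx ih =>
    rw [Finset.prod_insert hx]
    exact Pc_mul hna hε (h a (by simp)) (ih fun i hi => h i (by simp [hi]))

end CoeffBound

section Eval
variable {K : Type*} [NormedField K] {m : ℕ}

lemma Pc_psi (hna : IsNonarchimedean (fun x : K => ‖x‖)) {ε : ℝ} (hε : 0 ≤ ε)
    (x h : Fin m → K) (hx : ∀ j, ‖x j‖ ≤ 1) (hh : ∀ j, ‖h j‖ ≤ ε)
    (g : MvPolynomial (Fin m) K) (hg : ∀ d, ‖g.coeff d‖ ≤ 1) :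
    Pc ε (psi x h g) := by
  classical
  have base : ∀ j, Pc ε (Polynomial.C (x j) + Polynomial.X * Polynomial.C (h j)) := by
    intro j k
    match k with
    | 0 => simpa using hx j
    | 1 =>
      rw [Polynomial.coeff_add, Polynomial.coeff_C, if_neg (by norm_num),
        mul_comm Polynomial.X, Polynomial.coeff_mul_X]
      simpa using hh j
    | (n+2) =>
      rw [Polynomial.coeff_add, Polynomial.coeff_C, if_neg (by norm_num),
        mul_comm Polynomial.X, Polynomial.coeff_mul_X, Polynomial.coeff_C,
        if_neg (by norm_num)]
      simpa using pow_nonneg hε _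
  rw [← MvPolynomial.support_sum_monomial_coeff g, map_sum]
  refine Pc_sum hna hε _ _ fun d _ => ?_
  rw [MvPolynomial.monomial_eq, map_mul]
  refine Pc_mul hna hε (by simpa [psi] using Pc_C hε (hg d)) ?_
  rw [Finsupp.prod, map_prod]
  refine Pc_prod hna hε _ _ fun j _ => ?_
  rw [map_pow]
  refine Pc_pow hna hε ?_ _
  simpa [psi] using base j

lemma tail_bound (hna : IsNonarchimedean (fun x : K => ‖x‖)) {ε : ℝ} (hε : 0 ≤ ε) (hε1 : ε ≤ 1)
    (p : Polynomial K) (hp : Pc ε p) (N : ℕ) :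
    ‖p.eval 1 - ∑ k ∈ Finset.range N, p.coeff k‖ ≤ ε ^ N := by
  set n := max N (p.natDegree + 1) with hn
  have hdeg : p.natDegree < n := lt_of_lt_of_le (Nat.lt_succ_self _) (le_max_right _ _)
  have hNn : N ≤ n := le_max_left _ _
  rw [Polynomial.eval_eq_sum_range' hdeg]
  simp only [one_pow, mul_one]
  rw [← Finset.sum_range_add_sum_Ico _ hNn, add_sub_cancel_left]
  refine na_sum' hna _ _ (pow_nonneg hε _) fun k hk => ?_
  rw [Finset.mem_Ico] at hk
  exact le_trans (hp k) (pow_le_pow_of_le_one hε hε1 hk.1)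

lemma eval_norm_le (hna : IsNonarchimedean (fun x : K => ‖x‖))
    (g : MvPolynomial (Fin m) K) (hg : ∀ d, ‖g.coeff d‖ ≤ 1)
    (x : Fin m → K) (hx : ∀ j, ‖x j‖ ≤ 1) : ‖MvPolynomial.eval x g‖ ≤ 1 := by
  have := Pc_psi hna (le_refl (0:ℝ)) x (fun _ => 0) hx (fun j => by simp) g hg 0
  rw [psi_coeff_zero] at this
  simpa using this

lemma eval_lipschitz (hna : IsNonarchimedean (fun x : K => ‖x‖))
    (g : MvPolynomial (Fin m) K) (hg : ∀ d, ‖g.coeff d‖ ≤ 1)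
    (x y : Fin m → K) (hx : ∀ j, ‖x j‖ ≤ 1) {ε : ℝ} (hε : 0 ≤ ε) (hε1 : ε ≤ 1)
    (hxy : ∀ j, ‖y j - x j‖ ≤ ε) :
    ‖MvPolynomial.eval y g - MvPolynomial.eval x g‖ ≤ ε := by
  have hyx : (fun j => x j + (y j - x j)) = y := by funext j; ring
  have hPc := Pc_psi hna hε x (fun j => y j - x j) hx hxy g hg
  have := tail_bound hna hε hε1 _ hPc 1
  rw [psi_eval_one, hyx, Finset.sum_range_one, psi_coeff_zero] at this
  simpa using this

lemma taylor_bound (hna : IsNonarchimedean (fun x : K => ‖x‖))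
    (g : MvPolynomial (Fin m) K) (hg : ∀ d, ‖g.coeff d‖ ≤ 1)
    (x h : Fin m → K) (hx : ∀ j, ‖x j‖ ≤ 1) {ε : ℝ} (hε : 0 ≤ ε) (hε1 : ε ≤ 1)
    (hh : ∀ j, ‖h j‖ ≤ ε) :
    ‖MvPolynomial.eval (fun j => x j + h j) g - MvPolynomial.eval x g
      - ∑ j, h j * MvPolynomial.eval x (MvPolynomial.pderiv j g)‖ ≤ ε ^ 2 := by
  have hPc := Pc_psi hna hε x h hx hh g hg
  have := tail_bound hna hε hε1 _ hPc 2
  rw [psi_eval_one, Finset.sum_range_succ, Finset.sum_range_one,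
    psi_coeff_zero, psi_coeff_one] at this
  rw [sub_sub]
  exact this

lemma pderiv_coeff_le (hna : IsNonarchimedean (fun x : K => ‖x‖))
    (g : MvPolynomial (Fin m) K) (hg : ∀ d, ‖g.coeff d‖ ≤ 1) (j : Fin m)
    (e : (Fin m →₀ ℕ)) : ‖(MvPolynomial.pderiv j g).coeff e‖ ≤ 1 := by
  classical
  rw [← MvPolynomial.support_sum_monomial_coeff g, map_sum, MvPolynomial.coeff_sum]
  refine na_sum' hna _ _ zero_le_one fun d _ => ?_
  rw [MvPolynomial.pderiv_monomial, MvPolynomial.coeff_monomial]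
  split
  · rw [norm_mul]
    calc ‖g.coeff d‖ * ‖((d j : ℕ) : K)‖ ≤ 1 * 1 :=
      mul_le_mul (hg d) (na_natCast hna _) (norm_nonneg _) zero_le_one
    _ = 1 := one_mul 1
  · simp
end Eval

section MatrixFacts
variable {K : Type*} [NormedField K] {m : ℕ}

lemma det_norm_le (hna : IsNonarchimedean (fun x : K => ‖x‖))
    (A : Matrix (Fin m) (Fin m) K) (hA : ∀ i j, ‖A i j‖ ≤ 1) : ‖A.det‖ ≤ 1 := by
  rw [Matrix.det_apply]
  refine na_sum' hna _ _ zero_le_one fun σ _ => ?_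
  have hprod : ‖∏ i, A (σ i) i‖ ≤ 1 := by
    rw [norm_prod]
    exact Finset.prod_le_one (fun i _ => norm_nonneg _) (fun i _ => hA _ _)
  rcases Int.units_eq_one_or (Equiv.Perm.sign σ) with h | h <;> rw [h] <;>
    simpa [Units.smul_def] using hprod

lemma adjugate_norm_le (hna : IsNonarchimedean (fun x : K => ‖x‖))
    (A : Matrix (Fin m) (Fin m) K) (hA : ∀ i j, ‖A i j‖ ≤ 1) (i j : Fin m) :
    ‖A.adjugate i j‖ ≤ 1 := by
  classical
  rw [Matrix.adjugate_apply]
  refine det_norm_le hna _ fun i' j' => ?_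
  rw [Matrix.updateRow_apply]
  split
  · rw [Pi.single_apply]; split <;> simp
  · exact hA _ _

lemma mulVec_norm_le (hna : IsNonarchimedean (fun x : K => ‖x‖))
    (A : Matrix (Fin m) (Fin m) K) (v : Fin m → K) {C : ℝ} (hC : 0 ≤ C)
    (hA : ∀ i j, ‖A i j‖ ≤ 1) (hv : ∀ j, ‖v j‖ ≤ C) (i : Fin m) :
    ‖A.mulVec v i‖ ≤ C := by
  rw [Matrix.mulVec, dotProduct]
  refine na_sum' hna _ _ hC fun j _ => ?_
  calc ‖A i j * v j‖ = ‖A i j‖ * ‖v j‖ := norm_mul _ _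
    _ ≤ 1 * C := mul_le_mul (hA i j) (hv j) (norm_nonneg _) zero_le_one
    _ = C := one_mul C

end MatrixFacts

section NT
variable {K : Type*} [NormedField K] {m : ℕ}

noncomputable def newtonT (f : Fin m → MvPolynomial (Fin m) K)
    (J : Matrix (Fin m) (Fin m) K) (x : Fin m → K) : Fin m → K :=
  x - (J.det)⁻¹ • J.adjugate.mulVec (fun i => MvPolynomial.eval x (f i))

lemma newtonT_sub (f : Fin m → MvPolynomial (Fin m) K) (J : Matrix (Fin m) (Fin m) K)
    (x : Fin m → K) (j : Fin m) :
    newtonT f J x j - x j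
      = -((J.det)⁻¹ * J.adjugate.mulVec (fun i => MvPolynomial.eval x (f i)) j) := by
  simp [newtonT]

lemma newtonT_mulVec (f : Fin m → MvPolynomial (Fin m) K) (J : Matrix (Fin m) (Fin m) K)
    (x : Fin m → K) (hdet : J.det ≠ 0) :
    J.mulVec (fun j => newtonT f J x j - x j) = fun i => -(MvPolynomial.eval x (f i)) := by
  have : (fun j => newtonT f J x j - x j)
      = -((J.det)⁻¹ • J.adjugate.mulVec (fun i => MvPolynomial.eval x (f i))) := by
    funext j; simp [newtonT_sub f J x j]
  rw [this, Matrix.mulVec_neg, Matrix.mulVec_smul, Matrix.mulVec_mulVec,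
    Matrix.mul_adjugate, Matrix.smul_mulVec, Matrix.one_mulVec, smul_smul,
    inv_mul_cancel₀ hdet, one_smul]
  rfl

end NT

section StepEst
variable {K : Type*} [NormedField K] {m : ℕ}

lemma newton_step_est (hna : IsNonarchimedean (fun x : K => ‖x‖))
    (f : Fin m → MvPolynomial (Fin m) K) (hf : ∀ i d, ‖(f i).coeff d‖ ≤ 1)
    (J : Matrix (Fin m) (Fin m) K) (x : Fin m → K) (hx1 : ∀ j, ‖x j‖ ≤ 1)
    (hdet : J.det ≠ 0) {θ r : ℝ} (hθ0 : 0 ≤ θ) (hθ1 : θ ≤ 1)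
    (hθ : ∀ j, ‖newtonT f J x j - x j‖ ≤ θ) (hr0 : 0 ≤ r)
    (hr : ∀ i j, ‖MvPolynomial.eval x (MvPolynomial.pderiv j (f i)) - J i j‖ ≤ r) (i : Fin m) :
    ‖MvPolynomial.eval (newtonT f J x) (f i)‖ ≤ max (r * θ) (θ ^ 2) := by
  set h : Fin m → K := fun j => newtonT f J x j - x j with hh
  have hTx : (fun j => x j + h j) = newtonT f J x := funext fun j => by simp [hh]
  have htay := taylor_bound hna (f i) (hf i) x h hx1 hθ0 hθ1 hθ
  rw [hTx] at htay
  have hmv : (∑ j, J i j * h j) = -(MvPolynomial.eval x (f i)) := by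
    have := congrFun (newtonT_mulVec f J x hdet) i
    rw [Matrix.mulVec, dotProduct] at this
    exact this
  have hsplit : (∑ j, h j * MvPolynomial.eval x (MvPolynomial.pderiv j (f i)))
      = (∑ j, J i j * h j)
        + ∑ j, h j * (MvPolynomial.eval x (MvPolynomial.pderiv j (f i)) - J i j) := by
    rw [← Finset.sum_add_distrib]
    exact Finset.sum_congr rfl fun j _ => by ring
  have hkey : MvPolynomial.eval (newtonT f J x) (f i)
      = (MvPolynomial.eval (newtonT f J x) (f i) - MvPolynomial.eval x (f i)
          - ∑ j, h j * MvPolynomial.eval x (MvPolynomial.pderiv j (f i)))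
        + ∑ j, h j * (MvPolynomial.eval x (MvPolynomial.pderiv j (f i)) - J i j) := by
    rw [hsplit, hmv]; ring
  rw [hkey]
  refine le_trans (hna _ _) (max_le ?_ ?_)
  · exact le_trans htay (le_max_right _ _)
  · refine le_trans (na_sum' hna _ _ (mul_nonneg hr0 hθ0) fun j _ => ?_) (le_max_left _ _)
    rw [norm_mul, mul_comm]
    exact mul_le_mul (hr i j) (hθ j) (norm_nonneg _) hr0

end StepEst

set_option maxHeartbeats 2000000 in
/-- multidimensional Hensel's Lemma.  Let `K` be a field complete with respect to a
non-archimedean absolute value, with valuation ring `O = {x : ‖x‖ ≤ 1}`.  Let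
`f₁,…,f_m ∈ O[X₁,…,X_m]` and suppose `b ∈ O^m` satisfies
`‖(f₁(b),…,f_m(b))‖ < ‖det J_b‖²`, where `J_b` is the Jacobian matrix at `b`.  Then there is a
unique `a ∈ O^m` with `f_i(a) = 0` for all `i` and
`‖a − b‖ = ‖J_b⋆ · (f₁(b),…,f_m(b))ᵀ‖ / ‖det J_b‖`, where `J_b⋆` is the adjugate of `J_b`. -/
theorem stmt0 {K : Type*} [NormedField K] [CompleteSpace K]
    (hna : IsNonarchimedean (fun x : K => ‖x‖)) {m : ℕ}
    (f : Fin m → MvPolynomial (Fin m) K)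
    (hf : ∀ i d, ‖(f i).coeff d‖ ≤ 1)
    (b : Fin m → K) (hb : ∀ i, ‖b i‖ ≤ 1)
    (J : Matrix (Fin m) (Fin m) K)
    (hJ : ∀ i j, J i j = MvPolynomial.eval b (MvPolynomial.pderiv j (f i)))
    (hlt : supNorm (fun i => MvPolynomial.eval b (f i)) < ‖J.det‖ ^ 2) :
    ∃! a : Fin m → K,
      (∀ i, ‖a i‖ ≤ 1) ∧ (∀ i, MvPolynomial.eval a (f i) = 0) ∧
      supNorm (fun i => a i - b i) =
        supNorm (J.adjugate.mulVec (fun i => MvPolynomial.eval b (f i))) / ‖J.det‖ := by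
  classical
  have na : ∀ x y : K, ‖x + y‖ ≤ max ‖x‖ ‖y‖ := fun x y => hna x y
  set Fb : Fin m → K := fun i => MvPolynomial.eval b (f i) with hFb
  set δ : ℝ := ‖J.det‖ with hδdef
  have hJent : ∀ i j, ‖J i j‖ ≤ 1 := fun i j => by
    rw [hJ]; exact eval_norm_le hna _ (pderiv_coeff_le hna (f i) (hf i) j) b hb
  have hδ1 : δ ≤ 1 := det_norm_le hna J hJent
  have hε0 : 0 ≤ supNorm Fb := supNorm_nonneg _
  have hδsq : 0 < δ ^ 2 := lt_of_le_of_lt hε0 hlt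
  have hδ0 : 0 < δ := by nlinarith [norm_nonneg J.det]
  have hdet : J.det ≠ 0 := by
    intro h0
    rw [hδdef, h0, norm_zero] at hδ0; exact lt_irrefl 0 hδ0
  set ρ : ℝ := supNorm (J.adjugate.mulVec Fb) / δ with hρdef
  have hadj : ∀ i j, ‖J.adjugate i j‖ ≤ 1 := adjugate_norm_le hna J hJent
  have hsadj : supNorm (J.adjugate.mulVec Fb) ≤ supNorm Fb :=
    supNorm_le hε0 (mulVec_norm_le hna _ _ hε0 hadj (le_supNorm Fb))
  have hρ0 : 0 ≤ ρ := div_nonneg (supNorm_nonneg _) hδ0.le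
  have hρδ : ρ < δ := by
    rw [hρdef, div_lt_iff₀ hδ0]
    have := lt_of_le_of_lt hsadj hlt
    nlinarith
  have hρ1 : ρ ≤ 1 := hρδ.le.trans hδ1
  set c : ℝ := ρ / δ with hcdef
  have hc0 : 0 ≤ c := div_nonneg hρ0 hδ0.le
  have hc1 : c < 1 := (div_lt_one hδ0).mpr hρδ
  have hρc : ρ = δ * c := by rw [hcdef]; field_simp
  set T : (Fin m → K) → (Fin m → K) := newtonT f J with hTdef
  set seq : ℕ → (Fin m → K) := fun n => T^[n] b with hseqdef
  have hseq0 : seq 0 = b := rfl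
  have hseqS : ∀ n, seq (n + 1) = T (seq n) := fun n => Function.iterate_succ_apply' T n b
  have hTd : ∀ x : Fin m → K, ∀ j, ‖T x j - x j‖
      = ‖J.adjugate.mulVec (fun i => MvPolynomial.eval x (f i)) j‖ / δ := by
    intro x j
    rw [hTdef, newtonT_sub, norm_neg, norm_mul, norm_inv, ← hδdef]
    ring
  have hJac : ∀ x : Fin m → K, (∀ j, ‖x j - b j‖ ≤ ρ) →
      ∀ i j, ‖MvPolynomial.eval x (MvPolynomial.pderiv j (f i)) - J i j‖ ≤ ρ := by
    intro x hx i j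
    rw [hJ i j]
    exact eval_lipschitz hna _ (pderiv_coeff_le hna (f i) (hf i) j) b x hb hρ0 hρ1 hx
  have hO : ∀ x : Fin m → K, (∀ j, ‖x j - b j‖ ≤ ρ) → ∀ j, ‖x j‖ ≤ 1 := by
    intro x hx j
    have hxj : x j = (x j - b j) + b j := by ring
    rw [hxj]
    exact le_trans (na _ _) (max_le (le_trans (hx j) hρ1) (hb j))
  -- the basic invariant, proved by induction
  have inv : ∀ n, (∀ j, ‖seq (n + 1) j - seq n j‖ ≤ δ * c ^ (n + 1))
      ∧ (∀ j, ‖seq (n + 1) j - b j‖ ≤ ρ)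
      ∧ (∀ i, ‖MvPolynomial.eval (seq (n + 1)) (f i)‖ ≤ δ ^ 2 * c ^ (n + 2)) := by
    intro n
    induction n with
    | zero =>
      have hd : ∀ j, ‖seq 1 j - seq 0 j‖ ≤ δ * c ^ 1 := by
        intro j
        rw [hseqS 0, hseq0, hTd b j, pow_one, ← hρc, hρdef]
        gcongr
        exact le_supNorm _ j
      refine ⟨hd, ?_, ?_⟩
      · intro j
        have := hd j
        rw [hseq0] at this
        calc ‖seq 1 j - b j‖ ≤ δ * c ^ 1 := this
          _ = ρ := by rw [pow_one, ← hρc]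
      · intro i
        have hθ : ∀ j, ‖newtonT f J b j - b j‖ ≤ ρ := by
          intro j
          have := hd j
          rw [hseqS 0, hseq0, hTdef] at this
          calc ‖newtonT f J b j - b j‖ ≤ δ * c ^ 1 := this
            _ = ρ := by rw [pow_one, ← hρc]
        have hr : ∀ i j, ‖MvPolynomial.eval b (MvPolynomial.pderiv j (f i)) - J i j‖ ≤ 0 := by
          intro i j; rw [hJ i j]; simp
        have hst := newton_step_est hna f hf J b hb hdet hρ0 hρ1 hθ le_rfl hr i
        rw [hseqS 0, hseq0, hTdef]
        refine le_trans hst (max_le ?_ ?_)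
        · rw [zero_mul]; positivity
        · rw [hρc]; ring_nf; exact le_rfl
    | succ n ih =>
      obtain ⟨ihd, ihb, ihF⟩ := ih
      have hx1 : ∀ j, ‖seq (n + 1) j‖ ≤ 1 := hO _ ihb
      have hstepb : ∀ j, ‖seq (n + 2) j - seq (n + 1) j‖ ≤ δ * c ^ (n + 2) := by
        intro j
        rw [hseqS (n + 1), hTd (seq (n + 1)) j]
        have h2 : ‖J.adjugate.mulVec (fun i => MvPolynomial.eval (seq (n + 1)) (f i)) j‖
            ≤ δ ^ 2 * c ^ (n + 2) :=
          mulVec_norm_le hna _ _ (by positivity) hadj ihF j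
        rw [div_le_iff₀ hδ0]
        calc ‖J.adjugate.mulVec (fun i => MvPolynomial.eval (seq (n + 1)) (f i)) j‖
            ≤ δ ^ 2 * c ^ (n + 2) := h2
          _ = δ * c ^ (n + 2) * δ := by ring
      refine ⟨hstepb, ?_, ?_⟩
      · intro j
        have hsplit : seq (n + 2) j - b j
            = (seq (n + 2) j - seq (n + 1) j) + (seq (n + 1) j - b j) := by ring
        rw [hsplit]
        refine le_trans (na _ _) (max_le (le_trans (hstepb j) ?_) (ihb j))
        rw [hρc]
        refine mul_le_mul_of_nonneg_left ?_ hδ0.le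
        calc c ^ (n + 2) ≤ c ^ 1 := pow_le_pow_of_le_one hc0 hc1.le (by omega)
          _ = c := pow_one c
      · intro i
        have hθb : ∀ j, ‖newtonT f J (seq (n + 1)) j - seq (n + 1) j‖ ≤ δ * c ^ (n + 2) := by
          intro j
          have := hstepb j
          rwa [hseqS (n + 1), hTdef] at this
        have hθ1' : δ * c ^ (n + 2) ≤ 1 := by
          have hcp : c ^ (n + 2) ≤ 1 := pow_le_one₀ hc0 hc1.le
          nlinarith
        have hst := newton_step_est hna f hf J (seq (n + 1)) hx1 hdet
          (by positivity) hθ1' hθb hρ0 (hJac _ ihb) i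
        rw [hseqS (n + 1), hTdef]
        refine le_trans hst (max_le ?_ ?_)
        · have : ρ * (δ * c ^ (n + 2)) = δ ^ 2 * c ^ (n + 3) := by rw [hρc]; ring
          rw [this]
        · have he : (δ * c ^ (n + 2)) ^ 2 = δ ^ 2 * c ^ ((n + 2) + (n + 2)) := by
            rw [pow_add]; ring
          rw [he]
          refine mul_le_mul_of_nonneg_left ?_ (by positivity)
          exact pow_le_pow_of_le_one hc0 hc1.le (by omega)
  -- convergence
  have hCauchy : ∀ j, ∃ L : K, Filter.Tendsto (fun n => seq n j) Filter.atTop (nhds L) := by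
    intro j
    have hcs : CauchySeq (fun n => seq n j) := by
      apply cauchySeq_of_le_geometric c (δ * c) hc1
      intro n
      rw [dist_eq_norm, norm_sub_rev]
      calc ‖seq (n + 1) j - seq n j‖ ≤ δ * c ^ (n + 1) := (inv n).1 j
        _ = δ * c * c ^ n := by ring
    exact cauchySeq_tendsto_of_complete hcs
  choose a ha using hCauchy
  have hchain : ∀ n k j, ‖seq (n + k) j - seq n j‖ ≤ δ * c ^ (n + 1) := by
    intro n k j
    induction k with
    | zero => simp; positivity
    | succ k ih =>
      have hsplit : seq (n + (k + 1)) j - seq n j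
          = (seq (n + k + 1) j - seq (n + k) j) + (seq (n + k) j - seq n j) := by
        rw [show n + (k + 1) = n + k + 1 by ring]; ring
      rw [hsplit]
      refine le_trans (na _ _) (max_le (le_trans ((inv (n + k)).1 j) ?_) ih)
      exact mul_le_mul_of_nonneg_left (pow_le_pow_of_le_one hc0 hc1.le (by omega)) hδ0.le
  have hlim : ∀ n j, ‖a j - seq n j‖ ≤ δ * c ^ (n + 1) := by
    intro n j
    have ht : Filter.Tendsto (fun k => ‖seq k j - seq n j‖) Filter.atTop
        (nhds ‖a j - seq n j‖) := ((ha j).sub tendsto_const_nhds).norm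
    refine le_of_tendsto ht ?_
    filter_upwards [Filter.eventually_ge_atTop n] with k hk
    have := hchain n (k - n) j
    rwa [Nat.add_sub_cancel' hk] at this
  have hab : ∀ j, ‖a j - b j‖ ≤ ρ := by
    intro j
    have := hlim 0 j
    rw [hseq0] at this
    calc ‖a j - b j‖ ≤ δ * c ^ (0 + 1) := this
      _ = ρ := by rw [zero_add, pow_one, ← hρc]
  have ha1 : ∀ j, ‖a j‖ ≤ 1 := hO a hab
  have hFa : ∀ i, MvPolynomial.eval a (f i) = 0 := by
    intro i
    have key : ∀ n : ℕ, ‖MvPolynomial.eval a (f i)‖ ≤ δ * c ^ (n + 2) := by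
      intro n
      have hδc1 : δ * c ^ (n + 2) ≤ 1 := by
        have hcp : c ^ (n + 2) ≤ 1 := pow_le_one₀ hc0 hc1.le
        nlinarith
      have h1 : ‖MvPolynomial.eval a (f i) - MvPolynomial.eval (seq (n + 1)) (f i)‖
          ≤ δ * c ^ (n + 2) := by
        refine eval_lipschitz hna _ (hf i) (seq (n + 1)) a (hO _ (inv n).2.1)
          (by positivity) hδc1 ?_
        intro j
        exact hlim (n + 1) j
      have h2 := (inv n).2.2 i
      have hsplit : MvPolynomial.eval a (f i)
          = (MvPolynomial.eval a (f i) - MvPolynomial.eval (seq (n + 1)) (f i))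
            + MvPolynomial.eval (seq (n + 1)) (f i) := by ring
      rw [hsplit]
      refine le_trans (na _ _) (max_le h1 (le_trans h2 ?_))
      nlinarith [mul_nonneg (mul_nonneg (sub_nonneg.mpr hδ1) hδ0.le) (pow_nonneg hc0 (n + 2))]
    have h0 : Filter.Tendsto (fun n : ℕ => δ * c ^ (n + 2)) Filter.atTop (nhds 0) := by
      have h1 := tendsto_pow_atTop_nhds_zero_of_lt_one hc0 hc1
      have h2 : Filter.Tendsto (fun n : ℕ => c ^ (n + 2)) Filter.atTop (nhds 0) :=
        h1.comp (Filter.tendsto_add_atTop_nat 2)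
      simpa using h2.const_mul δ
    have hle0 : ‖MvPolynomial.eval a (f i)‖ ≤ 0 := ge_of_tendsto' h0 key
    exact norm_le_zero_iff.mp hle0
  have hsup_le : supNorm (fun i => a i - b i) ≤ ρ := supNorm_le hρ0 hab
  have hρ_le : ρ ≤ max (δ * c ^ 2) (supNorm (fun i => a i - b i)) := by
    have hM0 : (0:ℝ) ≤ max (δ * c ^ 2) (supNorm (fun i => a i - b i)) :=
      le_trans (by positivity) (le_max_left _ _)
    rw [hρdef, div_le_iff₀ hδ0]
    refine supNorm_le (mul_nonneg hM0 hδ0.le) fun j => ?_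
    have h1 : ‖T b j - b j‖ ≤ max (δ * c ^ 2) (supNorm (fun i => a i - b i)) := by
      have hsplit : T b j - b j = -(a j - T b j) + (a j - b j) := by ring
      rw [hsplit]
      refine le_trans (na _ _) (max_le ?_ ?_)
      · rw [norm_neg]
        have := hlim 1 j
        rw [hseqS 0, hseq0] at this
        exact le_trans this (le_max_left _ _)
      · exact le_trans (le_supNorm (fun i => a i - b i) j) (le_max_right _ _)
    have h2 := hTd b j
    rw [h2, div_le_iff₀ hδ0] at h1
    exact h1
  have hsup_eq : supNorm (fun i => a i - b i) = ρ := by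
    rcases le_or_gt ρ (supNorm (fun i => a i - b i)) with h | h
    · exact le_antisymm hsup_le h
    · have h2 : ρ ≤ δ * c ^ 2 := by
        rcases max_cases (δ * c ^ 2) (supNorm (fun i => a i - b i)) with ⟨he, _⟩ | ⟨he, hle⟩
        · rwa [he] at hρ_le
        · rw [he] at hρ_le; linarith
      have h3 : δ * c ^ 2 = ρ * c := by rw [hρc]; ring
      have h4 : ρ ≤ ρ * c := by linarith
      have hρz : ρ = 0 := le_antisymm (by nlinarith) hρ0
      exfalso
      rw [hρz] at h
      exact absurd h (not_lt.mpr (supNorm_nonneg _))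
  refine ⟨a, ⟨ha1, hFa, hsup_eq⟩, ?_⟩
  rintro y ⟨hy1, hyF, hys⟩
  set h : Fin m → K := fun j => y j - a j with hhdef
  set t : ℝ := supNorm h with htdef
  have ht0 : 0 ≤ t := supNorm_nonneg _
  have hyb : ∀ j, ‖y j - b j‖ ≤ ρ := fun j => le_trans (le_supNorm (fun i => y i - b i) j) (le_of_eq hys)
  have hht : ∀ j, ‖h j‖ ≤ t := le_supNorm h
  have htρ : t ≤ ρ := by
    refine supNorm_le hρ0 fun j => ?_
    have hsplit : h j = (y j - b j) + -(a j - b j) := by rw [hhdef]; ring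
    rw [hsplit]
    refine le_trans (na _ _) (max_le (hyb j) ?_)
    rw [norm_neg]; exact hab j
  have ht1 : t ≤ 1 := htρ.trans hρ1
  have hJv : ∀ i, ‖J.mulVec h i‖ ≤ t * ρ := by
    intro i
    have hy' : (fun j => a j + h j) = y := funext fun j => by rw [hhdef]; ring
    have htay := taylor_bound hna (f i) (hf i) a h ha1 ht0 ht1 hht
    rw [hy', hyF i, hFa i] at htay
    have hsum : ‖∑ j, h j * MvPolynomial.eval a (MvPolynomial.pderiv j (f i))‖ ≤ t ^ 2 := by
      simpa using htay
    have hsplit : J.mulVec h i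
        = (∑ j, h j * MvPolynomial.eval a (MvPolynomial.pderiv j (f i)))
          + ∑ j, -(h j * (MvPolynomial.eval a (MvPolynomial.pderiv j (f i)) - J i j)) := by
      rw [Matrix.mulVec, dotProduct, ← Finset.sum_add_distrib]
      exact Finset.sum_congr rfl fun j _ => by ring
    rw [hsplit]
    refine le_trans (na _ _) (max_le (le_trans hsum (by nlinarith [mul_le_mul_of_nonneg_left htρ ht0])) ?_)
    refine na_sum' hna _ _ (mul_nonneg ht0 hρ0) fun j _ => ?_
    rw [norm_neg, norm_mul]
    exact mul_le_mul (hht j) (hJac a hab i j) (norm_nonneg _) ht0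
  have hdh : ∀ j, δ * ‖h j‖ ≤ t * ρ := by
    intro j
    have hid : (J.det • h) j = J.adjugate.mulVec (J.mulVec h) j := by
      rw [Matrix.mulVec_mulVec, Matrix.adjugate_mul, Matrix.smul_mulVec,
        Matrix.one_mulVec]
    calc δ * ‖h j‖ = ‖(J.det • h) j‖ := by
          rw [Pi.smul_apply, smul_eq_mul, norm_mul, hδdef]
      _ = ‖J.adjugate.mulVec (J.mulVec h) j‖ := by rw [hid]
      _ ≤ t * ρ := mulVec_norm_le hna _ _ (mul_nonneg ht0 hρ0) hadj hJv j
  have htt : t ≤ t * c := by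
    have h5 : t ≤ t * ρ / δ := by
      refine supNorm_le (by positivity) fun j => ?_
      rw [le_div_iff₀ hδ0]
      have := hdh j
      linarith [hdh j]
    calc t ≤ t * ρ / δ := h5
      _ = t * c := by rw [hcdef]; ring
  have htz : t = 0 := le_antisymm (by nlinarith) ht0
  funext j
  have hj0 : ‖h j‖ ≤ 0 := htz ▸ hht j
  have hj : h j = 0 := norm_le_zero_iff.mp hj0
  exact sub_eq_zero.mp hj
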